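/- Let R be a commutative ring, s ≥ 1, and a, b, c, x ∈ R with x^{2^s} = (b·c)^{2^{s-1}}, b²c = bc², a²c = ac², and a^{2^s} = b^{2^s} = c^{2^s} = 0. Then x^{2^s}·b = 0, x^{2^s}·c = 0, and x^{2^s}·a² = 0. -/

import Mathlib

lemma pow_mul_key {R : Type*} [CommRing R] (y c : R) (h : y ^ 2 * c = y * c ^ 2) :
    ∀ k : ℕ, y ^ (k + 1) * c = y * c ^ (k + 1) := by
  intro k
  induction k with
  | zero => simp
  | succ k ih =>
    have : y ^ (k + 2) * c = y ^ k * (y ^ 2 * c) := by ring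
    rw [this, h]
    have : y ^ k * (y * c ^ 2) = (y ^ (k + 1) * c) * c := by ring
    rw [this, ih]; ring

/-- In a commutative ring, if `x^{2^s} = (bc)^{2^{s-1}}`, `b²c = bc²`, `a²c = ac²`,
and `a^{2^s} = b^{2^s} = c^{2^s} = 0` (with `s ≥ 1`), then `x^{2^s}` annihilates
`b`, `c` and `a²`. -/
theorem pow_annihilates {R : Type*} [CommRing R] (s : ℕ) (hs : 1 ≤ s)
    (a b c x : R) (hx : x ^ 2 ^ s = (b * c) ^ 2 ^ (s - 1))
    (hb2 : b ^ 2 * c = b * c ^ 2) (ha2 : a ^ 2 * c = a * c ^ 2)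
    (ha : a ^ 2 ^ s = 0) (hb : b ^ 2 ^ s = 0) (hc : c ^ 2 ^ s = 0) :
    x ^ 2 ^ s * b = 0 ∧ x ^ 2 ^ s * c = 0 ∧ x ^ 2 ^ s * a ^ 2 = 0 := by
  obtain ⟨m, hm⟩ : ∃ m : ℕ, 2 ^ (s - 1) = m + 1 :=
    ⟨2 ^ (s - 1) - 1, (Nat.succ_pred_eq_of_pos (pow_pos (by norm_num : (0:ℕ) < 2) _)).symm⟩
  have h2s : 2 ^ s = (m + 1) + (m + 1) := by
    have : s = (s - 1) + 1 := (Nat.succ_pred_eq_of_pos hs).symm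
    rw [this, pow_succ, hm]; ring
  rw [hx, hm]
  have hcz : c ^ ((m + 1) + (m + 1)) = 0 := by rw [← h2s]; exact hc
  have keyb := pow_mul_key b c hb2
  have keya := pow_mul_key a c ha2
  refine ⟨?_, ?_, ?_⟩
  · have : (b * c) ^ (m + 1) * b = (b ^ (m + 1 + 1) * c) * c ^ m := by ring
    rw [this, keyb (m + 1)]
    calc b * c ^ (m + 1 + 1) * c ^ m = b * c ^ ((m + 1) + (m + 1)) := by ring
      _ = 0 := by rw [hcz, mul_zero]
  · have : (b * c) ^ (m + 1) * c = (b ^ (m + 1) * c) * c ^ (m + 1) := by ring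
    rw [this, keyb m]
    calc b * c ^ (m + 1) * c ^ (m + 1) = b * c ^ ((m + 1) + (m + 1)) := by ring
      _ = 0 := by rw [hcz, mul_zero]
  · have h1 : (b * c) ^ (m + 1) * a ^ 2 = b ^ (m + 1) * (a ^ (1 + 1) * c) * c ^ m := by ring
    rw [h1, keya 1]
    have h2 : b ^ (m + 1) * (a * c ^ (1 + 1)) * c ^ m = a * ((b ^ (m + 1) * c) * c ^ (m + 1)) := by
      ring
    rw [h2, keyb m]
    calc a * (b * c ^ (m + 1) * c ^ (m + 1)) = a * b * c ^ ((m + 1) + (m + 1)) := by ring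
      _ = 0 := by rw [hcz, mul_zero]
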